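/- arXiv:1007.4932 — 3 statements merged into one kernel-verified Lean document; each statement's English description precedes it below -/
import Mathlib

section
/- Let 0 < a ≤ b ≤ 2. There is a constant c₁ > 0 depending only on a and b with the following property: for every Lebesgue measurable α : ℝ → [a,b], every g ∈ F_α, and every real random variable X whose characteristic function satisfies 𝔼[exp(iθX)] = exp(−∫_ℝ |θ g(x)|^{α(x)} dx) for all θ ∈ ℝ, one has ℙ(|X| ≥ λ) ≤ c₁ ∫_ℝ |g(x)/λ|^{α(x)} dx for every λ > 0. -/
open MeasureTheory Filter Set Topology ProbabilityTheory BoundedContinuousFunction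

noncomputable section

/-- Membership in `F_α`: `f` is measurable and either a.e. zero or there is a (unique)
`λ > 0` with `∫ |f(x)/λ|^{α(x)} dx = 1`. -/
def MemFalpha (α f : ℝ → ℝ) : Prop :=
  Measurable f ∧ (f =ᵐ[volume] (0 : ℝ → ℝ) ∨ ∃ lam > (0:ℝ), ∫ x : ℝ, |f x / lam| ^ α x = 1)

/-- The quasinorm `‖f‖_α`, the unique `λ > 0` with `∫ |f(x)/λ|^{α(x)} dx = 1`
(and `0` if no such `λ` exists, e.g. if `f = 0` a.e.). -/
def alphaNorm (α f : ℝ → ℝ) : ℝ :=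
  sInf {lam : ℝ | 0 < lam ∧ ∫ x : ℝ, |f x / lam| ^ α x = 1}

/-- `|s|^{a,b} = max{|s|^a, |s|^b}`. -/
def pab (a b s : ℝ) : ℝ := max (|s| ^ a) (|s| ^ b)

/-- Membership in `F_{a,b}`: measurable with `∫ |f(x)|^{a,b} dx < ∞`. -/
def MemFab (a b : ℝ) (f : ℝ → ℝ) : Prop :=
  Measurable f ∧ Integrable (fun x : ℝ => pab a b (f x))

/-- The norm `‖f‖_p = (∫ |f(x)|^p dx)^{1/p}`. -/
def pNorm (p : ℝ) (f : ℝ → ℝ) : ℝ := (∫ x : ℝ, |f x| ^ p) ^ (1 / p)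

/-- Membership in `E₀`: Lebesgue measurable with finite Lebesgue measure. -/
def MemE0 (A : Set ℝ) : Prop := MeasurableSet A ∧ volume A < ⊤

/-- tail estimate for a multistable integral:
`ℙ(|X| ≥ λ) ≤ c₁ ∫ |g(x)/λ|^{α(x)} dx`, with `c₁` depending only on `a`, `b`. -/
theorem multistable_integral_tail_bound (a b : ℝ) (ha : 0 < a) (hab : a ≤ b) (hb : b ≤ 2) :
    ∃ c₁ > (0:ℝ), ∀ (α : ℝ → ℝ), Measurable α → (∀ x, α x ∈ Set.Icc a b) →
      ∀ g : ℝ → ℝ, MemFalpha α g →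
      ∀ (Ω : Type) (_ : MeasurableSpace Ω) (P : Measure Ω), IsProbabilityMeasure P →
      ∀ X : Ω → ℝ, Measurable X →
        (∀ θ : ℝ,
          ∫ ω, Complex.exp (Complex.I * ((θ * X ω : ℝ) : ℂ)) ∂P =
            ((Real.exp (-(∫ x : ℝ, |θ * g x| ^ α x)) : ℝ) : ℂ)) →
      ∀ lam > (0:ℝ),
        (P {ω | lam ≤ |X ω|}).toReal ≤ c₁ * ∫ x : ℝ, |g x / lam| ^ α x := by
  refine ⟨8, by norm_num, ?_⟩
  intro α hαm hα g hg Ω mΩ P hP X hX hcf lam hlam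
  have hgm : Measurable g := hg.1
  set J := ∫ x : ℝ, |g x / lam| ^ α x with hJdef
  have hJ0 : 0 ≤ J := integral_nonneg fun x => Real.rpow_nonneg (abs_nonneg _) _
  set u : ℝ := 2 / lam with hudef
  have hu : 0 < u := by positivity
  -- real part of characteristic function
  have hcos : ∀ θ : ℝ, ∫ ω, Real.cos (θ * X ω) ∂P
      = Real.exp (-(∫ x : ℝ, |θ * g x| ^ α x)) := by
    intro θ
    have hmeas : AEStronglyMeasurable
        (fun ω => Complex.exp (Complex.I * ((θ * X ω : ℝ) : ℂ))) P := by
      apply Measurable.aestronglyMeasurable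
      exact Complex.measurable_exp.comp
        (measurable_const.mul (Complex.measurable_ofReal.comp (measurable_const.mul hX)))
    have hint : Integrable (fun ω => Complex.exp (Complex.I * ((θ * X ω : ℝ) : ℂ))) P := by
      refine Integrable.mono' (integrable_const 1) hmeas (Eventually.of_forall fun ω => ?_)
      rw [mul_comm, Complex.norm_exp_ofReal_mul_I]
    have h1 : ∫ ω, (Complex.exp (Complex.I * ((θ * X ω : ℝ) : ℂ))).re ∂P
        = (∫ ω, Complex.exp (Complex.I * ((θ * X ω : ℝ) : ℂ)) ∂P).re :=
      Complex.reCLM.integral_comp_comm hint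
    have h2 : ∀ ω : Ω, (Complex.exp (Complex.I * ((θ * X ω : ℝ) : ℂ))).re
        = Real.cos (θ * X ω) := by
      intro ω; rw [mul_comm]; exact Complex.exp_ofReal_mul_I_re _
    simp_rw [h2] at h1
    rw [h1, hcf θ, Complex.ofReal_re]
  have hcosInt : ∀ θ : ℝ, Integrable (fun ω => Real.cos (θ * X ω)) P := by
    intro θ
    refine Integrable.mono' (integrable_const 1)
      (Measurable.aestronglyMeasurable (Real.measurable_cos.comp (measurable_const.mul hX)))
      (Eventually.of_forall fun ω => ?_)
    rw [Real.norm_eq_abs]; exact Real.abs_cos_le_one _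
  -- pointwise bound on the inner probability integral
  have hB : ∀ θ ∈ Set.Ioc (0:ℝ) u,
      ∫ ω, (1 - Real.cos (θ * X ω)) ∂P ≤ 4 * J := by
    rintro θ ⟨hθ0, hθu⟩
    have hIθ0 : 0 ≤ ∫ x : ℝ, |θ * g x| ^ α x :=
      integral_nonneg fun x => Real.rpow_nonneg (abs_nonneg _) _
    have e1 : ∫ ω, (1 - Real.cos (θ * X ω)) ∂P
        = 1 - Real.exp (-(∫ x : ℝ, |θ * g x| ^ α x)) := by
      rw [integral_sub (integrable_const 1) (hcosInt θ), hcos θ, integral_const]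
      simp
    have e2 : 1 - Real.exp (-(∫ x : ℝ, |θ * g x| ^ α x)) ≤ ∫ x : ℝ, |θ * g x| ^ α x := by
      have := Real.add_one_le_exp (-(∫ x : ℝ, |θ * g x| ^ α x)); linarith
    have hθl : θ * lam ≤ 2 := (le_div_iff₀ hlam).mp hθu
    have hθl0 : 0 < θ * lam := by positivity
    have hpt : ∀ x : ℝ, |θ * g x| ^ α x ≤ 4 * (|g x / lam| ^ α x) := by
      intro x
      obtain ⟨hAa, hAb⟩ := hα x
      have hA0 : (0:ℝ) < α x := lt_of_lt_of_le ha hAa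
      have h1 : |θ * g x| = (θ * lam) * |g x / lam| := by
        rw [abs_mul, abs_div, abs_of_pos hθ0, abs_of_pos hlam]
        field_simp
      have h2 : |θ * g x| ^ α x = (θ * lam) ^ α x * |g x / lam| ^ α x := by
        rw [h1, Real.mul_rpow hθl0.le (abs_nonneg _)]
      have h3 : (θ * lam) ^ α x ≤ 4 := by
        calc (θ * lam) ^ α x ≤ (2:ℝ) ^ α x :=
              Real.rpow_le_rpow hθl0.le hθl hA0.le
          _ ≤ (2:ℝ) ^ (2:ℝ) :=
              Real.rpow_le_rpow_of_exponent_le one_le_two (hAb.trans hb)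
          _ = 4 := by
              rw [show (2:ℝ) = ((2:ℕ):ℝ) by norm_num, Real.rpow_natCast]; norm_num
      rw [h2]
      exact mul_le_mul_of_nonneg_right h3 (Real.rpow_nonneg (abs_nonneg _) _)
    have hmeasθ : Measurable fun x : ℝ => |θ * g x| ^ α x :=
      ((measurable_const.mul hgm).abs).pow hαm
    have hmeasJ : Measurable fun x : ℝ => |g x / lam| ^ α x :=
      ((hgm.div_const lam).abs).pow hαm
    have e3 : (∫ x : ℝ, |θ * g x| ^ α x) ≤ 4 * J := by
      by_cases hIntJ : Integrable (fun x : ℝ => |g x / lam| ^ α x) volume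
      · calc (∫ x : ℝ, |θ * g x| ^ α x)
            ≤ ∫ x : ℝ, 4 * (|g x / lam| ^ α x) :=
              integral_mono_of_nonneg
                (Eventually.of_forall fun x => Real.rpow_nonneg (abs_nonneg _) _)
                (hIntJ.const_mul 4) (Eventually.of_forall hpt)
          _ = 4 * J := by rw [integral_const_mul]
      · have hnf : ¬ Integrable (fun x : ℝ => |θ * g x| ^ α x) volume := by
          intro hf
          apply hIntJ
          set C : ℝ := max ((θ * lam)⁻¹ ^ a) ((θ * lam)⁻¹ ^ b) with hCdef
          have hti : (0:ℝ) < (θ * lam)⁻¹ := by positivity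
          refine Integrable.mono' (hf.const_mul C) hmeasJ.aestronglyMeasurable
            (Eventually.of_forall fun x => ?_)
          obtain ⟨hAa, hAb⟩ := hα x
          have hrev : |g x / lam| = (θ * lam)⁻¹ * |θ * g x| := by
            rw [abs_mul, abs_div, abs_of_pos hθ0, abs_of_pos hlam]
            field_simp
          have hC : ((θ * lam)⁻¹) ^ α x ≤ C := by
            rcases le_total ((θ * lam)⁻¹) 1 with h | h
            · exact le_max_of_le_left (Real.rpow_le_rpow_of_exponent_ge hti h hAa)
            · exact le_max_of_le_right (Real.rpow_le_rpow_of_exponent_le h hAb)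
          rw [Real.norm_eq_abs, abs_of_nonneg (Real.rpow_nonneg (abs_nonneg _) _),
            hrev, Real.mul_rpow hti.le (abs_nonneg _)]
          exact mul_le_mul_of_nonneg_right hC (Real.rpow_nonneg (abs_nonneg _) _)
        rw [integral_undef hnf]
        positivity
    linarith [e1, e2, e3]
  -- Fubini setup
  set ν : Measure ℝ := volume.restrict (Set.Ioc (0:ℝ) u) with hνdef
  haveI : IsFiniteMeasure ν := by
    constructor
    rw [hνdef, Measure.restrict_apply_univ, Real.volume_Ioc]
    exact ENNReal.ofReal_lt_top
  set f : Ω → ℝ → ℝ := fun ω θ => 1 - Real.cos (θ * X ω) with hfdef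
  have hFm : AEStronglyMeasurable (Function.uncurry f) (P.prod ν) :=
    (measurable_const.sub (Real.measurable_cos.comp
      (measurable_snd.mul (hX.comp measurable_fst)))).aestronglyMeasurable
  have hFi : Integrable (Function.uncurry f) (P.prod ν) := by
    refine Integrable.mono' (integrable_const 2) hFm (Eventually.of_forall fun p => ?_)
    have h1 := Real.cos_le_one (p.2 * X p.1)
    have h2 := Real.neg_one_le_cos (p.2 * X p.1)
    simp only [hfdef, Function.uncurry]
    rw [Real.norm_eq_abs, abs_le]
    constructor <;> linarith
  have hswap : ∫ ω, ∫ θ, f ω θ ∂ν ∂P = ∫ θ, ∫ ω, f ω θ ∂P ∂ν :=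
    integral_integral_swap hFi
  -- upper bound on the swapped integral
  have hupper : ∫ θ, ∫ ω, f ω θ ∂P ∂ν ≤ u * (4 * J) := by
    have h1 : ∫ θ, ∫ ω, f ω θ ∂P ∂ν ≤ ∫ _θ, 4 * J ∂ν := by
      refine integral_mono_ae hFi.integral_prod_right (integrable_const _) ?_
      rw [hνdef]
      filter_upwards [ae_restrict_mem measurableSet_Ioc] with θ hθ
      exact hB θ hθ
    have h2 : ∫ _θ, (4 * J : ℝ) ∂ν = u * (4 * J) := by
      rw [integral_const, hνdef, measureReal_restrict_apply_univ, Real.volume_real_Ioc]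
      simp [ENNReal.toReal_ofReal hu.le, smul_eq_mul, hu.le]
    linarith [h1, h2.le, h2.ge]
  -- lower bound of the left side
  set S : Set Ω := {ω | lam ≤ |X ω|} with hSdef
  have hS : MeasurableSet S := measurableSet_le measurable_const hX.abs
  have hG0 : ∀ ω, 0 ≤ ∫ θ, f ω θ ∂ν := by
    intro ω
    refine integral_nonneg fun θ => ?_
    simp only [hfdef, Pi.zero_apply]
    nlinarith [Real.cos_le_one (θ * X ω)]
  have hGl : ∀ ω ∈ S, u / 2 ≤ ∫ θ, f ω θ ∂ν := by
    intro ω hω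
    have hx : lam ≤ |X ω| := hω
    have hx0 : X ω ≠ 0 := by
      intro h; rw [h, abs_zero] at hx; linarith
    have hio : ∫ θ, f ω θ ∂ν = ∫ θ in (0:ℝ)..u, (1 - Real.cos (θ * X ω)) :=
      (intervalIntegral.integral_of_le hu.le).symm
    have hci : IntervalIntegrable (fun θ => Real.cos (θ * X ω)) volume 0 u :=
      (Real.continuous_cos.comp (continuous_id.mul continuous_const)).intervalIntegrable 0 u
    have hsub : ∫ θ in (0:ℝ)..u, (1 - Real.cos (θ * X ω))
        = u - (X ω)⁻¹ * Real.sin (u * X ω) := by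
      rw [intervalIntegral.integral_sub (intervalIntegrable_const) hci]
      have hc : ∫ θ in (0:ℝ)..u, Real.cos (θ * X ω)
          = (X ω)⁻¹ * Real.sin (u * X ω) := by
        rw [intervalIntegral.integral_comp_mul_right Real.cos hx0]
        simp [integral_cos]
      rw [hc]
      simp
    have hsin : |(X ω)⁻¹ * Real.sin (u * X ω)| ≤ u / 2 := by
      have h1 : |(X ω)⁻¹ * Real.sin (u * X ω)| ≤ |X ω|⁻¹ * 1 := by
        rw [abs_mul, abs_inv]
        exact mul_le_mul_of_nonneg_left (Real.abs_sin_le_one _) (by positivity)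
      have h2 : |X ω|⁻¹ ≤ lam⁻¹ := by
        apply inv_anti₀ hlam hx
      have h3 : lam⁻¹ = u / 2 := by rw [hudef]; field_simp
      linarith
    rw [hio, hsub]
    have := abs_le.mp hsin
    linarith [this.2]
  have hGint : Integrable (fun ω => ∫ θ, f ω θ ∂ν) P := hFi.integral_prod_left
  have hlow : (u / 2) * (P S).toReal ≤ ∫ ω, ∫ θ, f ω θ ∂ν ∂P := by
    have hind : ∫ ω, S.indicator (fun _ => u / 2) ω ∂P = (P S).toReal • (u / 2) := by
      rw [integral_indicator_const _ hS]; rfl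
    have hmono : ∫ ω, S.indicator (fun _ => u / 2) ω ∂P ≤ ∫ ω, ∫ θ, f ω θ ∂ν ∂P := by
      refine integral_mono ((integrable_const (u/2)).indicator hS) hGint fun ω => ?_
      by_cases hω : ω ∈ S
      · rw [Set.indicator_of_mem hω]; exact hGl ω hω
      · rw [Set.indicator_of_notMem hω]; exact hG0 ω
    rw [hind] at hmono
    rw [smul_eq_mul] at hmono
    linarith [hmono]
  -- conclude
  have key : (u / 2) * (P S).toReal ≤ u * (4 * J) := by
    calc (u / 2) * (P S).toReal ≤ ∫ ω, ∫ θ, f ω θ ∂ν ∂P := hlow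
      _ = ∫ θ, ∫ ω, f ω θ ∂P ∂ν := hswap
      _ ≤ u * (4 * J) := hupper
  have hp : (P S).toReal / 2 ≤ 4 * J := by
    have h := key
    have : u * ((P S).toReal / 2) ≤ u * (4 * J) := by linarith
    exact le_of_mul_le_mul_left this hu
  linarith
end
end

section
/- Let 0 < a ≤ b ≤ 2 and let α : ℝ → [a,b] be continuous with |α(x+r) − α(x)| = o(1/|log r|) as r → 0⁺, uniformly for x in bounded intervals. Let u ∈ ℝ and let g ∈ F_{a,b} have compact support. Then lim_{r → 0⁺} ∫_ℝ |g(z)|^{α(rz+u)} r^{1 − α(rz+u)/α(u)} dz = ∫_ℝ |g(z)|^{α(u)} dz. -/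
open MeasureTheory Filter Set Topology ProbabilityTheory BoundedContinuousFunction

noncomputable section

/-- `|α(x+r) − α(x)| = o(1/log r)` as `r → 0⁺`, uniformly on bounded intervals. -/
def LogLittleO (α : ℝ → ℝ) : Prop :=
  ∀ R > (0:ℝ), ∀ ε > (0:ℝ), ∃ δ > (0:ℝ), ∀ r : ℝ, 0 < r → r < δ →
    ∀ x ∈ Set.Icc (-R) R, |α (x + r) - α x| * |Real.log r| ≤ ε

lemma measurable_abs_rpow {f h : ℝ → ℝ} (hf : Measurable f) (hh : Measurable h)
    (hne : ∀ x, h x ≠ 0) : Measurable fun x => |f x| ^ h x := by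
  have heq : (fun x => |f x| ^ h x) =
      fun x => if |f x| = 0 then 0 else Real.exp (Real.log |f x| * h x) := by
    funext x
    rw [Real.rpow_def_of_nonneg (abs_nonneg _)]
    by_cases hx : |f x| = 0 <;> simp [hx, hne x]
  rw [heq]
  exact Measurable.ite (hf.abs (measurableSet_singleton 0)) measurable_const
    (Real.measurable_exp.comp ((Real.measurable_log.comp hf.abs).mul hh))

lemma abs_rpow_le_pab {a b c : ℝ} (ha : 0 < a) (hac : a ≤ c) (hcb : c ≤ b) (t : ℝ) :
    |t| ^ c ≤ pab a b t := by
  unfold pab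
  rcases le_or_gt |t| 1 with h | h
  · rcases eq_or_lt_of_le (abs_nonneg t) with h0 | h0
    · rw [← h0, Real.zero_rpow (show (0:ℝ) < c by linarith).ne']
      exact le_max_of_le_left (Real.rpow_nonneg (le_refl 0) a)
    · exact le_max_of_le_left (Real.rpow_le_rpow_of_exponent_ge h0 h hac)
  · exact le_max_of_le_right (Real.rpow_le_rpow_of_exponent_le h.le hcb)

/-- for `g ∈ F_{a,b}` with compact support,
`∫ |g(z)|^{α(rz+u)} r^{1−α(rz+u)/α(u)} dz → ∫ |g(z)|^{α(u)} dz` as `r → 0⁺`. -/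
theorem multistable_local_integral_limit (a b : ℝ) (ha : 0 < a) (hab : a ≤ b) (hb : b ≤ 2)
    (α : ℝ → ℝ) (hαc : Continuous α) (hα : ∀ x, α x ∈ Set.Icc a b)
    (hlog : LogLittleO α) (u : ℝ)
    (g : ℝ → ℝ) (hg : MemFab a b g) (hgc : HasCompactSupport g) :
    Tendsto
      (fun r : ℝ => ∫ z : ℝ, |g z| ^ α (r * z + u) * r ^ (1 - α (r * z + u) / α u))
      (𝓝[>] (0:ℝ)) (𝓝 (∫ z : ℝ, |g z| ^ α u)) := by
  obtain ⟨hgm, hgi⟩ := hg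
  have hau : 0 < α u := lt_of_lt_of_le ha (hα u).1
  have hαpos : ∀ x, 0 < α x := fun x => lt_of_lt_of_le ha (hα x).1
  -- bound on the support
  obtain ⟨Z, hZ1, hZ0⟩ : ∃ Z : ℝ, 1 ≤ Z ∧ tsupport g ⊆ Metric.closedBall 0 Z := by
    obtain ⟨Z0, hZ0⟩ := hgc.isBounded.subset_closedBall 0
    exact ⟨max Z0 1, le_max_right _ _,
      hZ0.trans (Metric.closedBall_subset_closedBall (le_max_left _ _))⟩
  have hZpos : (0:ℝ) < Z := lt_of_lt_of_le one_pos hZ1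
  have hlogZ : 0 ≤ Real.log Z := Real.log_nonneg hZ1
  have hsupp : ∀ z : ℝ, Z < |z| → g z = 0 := by
    intro z hz
    by_contra h
    have hm := hZ0 (subset_tsupport g h)
    rw [Metric.mem_closedBall, Real.dist_eq, sub_zero] at hm
    exact absurd hm (not_le.mpr hz)
  -- key uniform estimate
  have key : ∀ ε > (0:ℝ), ∀ᶠ r in 𝓝[>] (0:ℝ), ∀ z : ℝ, |z| ≤ Z →
      |α (r * z + u) - α u| * |Real.log r| ≤ ε := by
    intro ε hε
    have hRpos : (0:ℝ) < |u| + Z + 1 := by positivity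
    obtain ⟨δ₂, hδ₂pos, hδ₂⟩ := hlog (|u| + Z + 1) hRpos (ε/2) (half_pos hε)
    have hL1 : (0:ℝ) < Real.log Z + 1 := by linarith
    obtain ⟨ε₂, hε₂pos, hε₂logZ⟩ : ∃ ε₂ > (0:ℝ), ε₂ * Real.log Z ≤ ε / 2 := by
      refine ⟨ε / (2 * (Real.log Z + 1)), div_pos hε (by linarith), ?_⟩
      have h1 : ε / (2 * (Real.log Z + 1)) * (2 * (Real.log Z + 1)) = ε := by
        field_simp
      nlinarith [div_pos hε (show (0:ℝ) < 2 * (Real.log Z + 1) by linarith)]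
    obtain ⟨δ₁, hδ₁pos, hδ₁⟩ := Metric.continuous_iff.mp hαc u ε₂ hε₂pos
    have hdpos : (0:ℝ) < min (min δ₁ δ₂) 1 := lt_min (lt_min hδ₁pos hδ₂pos) one_pos
    filter_upwards [Ioo_mem_nhdsGT_of_mem
      ⟨le_refl (0:ℝ), div_pos hdpos hZpos⟩] with r hr z hzZ
    obtain ⟨hr0, hrδ⟩ := hr
    rcases eq_or_ne z 0 with rfl | hz0
    · simpa using hε.le
    have hzpos : 0 < |z| := abs_pos.mpr hz0
    have hrZ : r * Z < min (min δ₁ δ₂) 1 := (lt_div_iff₀ hZpos).mp hrδ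
    have hsZ : r * |z| ≤ r * Z := mul_le_mul_of_nonneg_left hzZ hr0.le
    have hspos : 0 < r * |z| := mul_pos hr0 hzpos
    have hsδ₁ : r * |z| < δ₁ :=
      lt_of_le_of_lt hsZ (hrZ.trans_le ((min_le_left _ _).trans (min_le_left _ _)))
    have hsδ₂ : r * |z| < δ₂ :=
      lt_of_le_of_lt hsZ (hrZ.trans_le ((min_le_left _ _).trans (min_le_right _ _)))
    have hs1 : r * |z| < 1 := lt_of_le_of_lt hsZ (hrZ.trans_le (min_le_right _ _))
    have hr1 : r < 1 := by nlinarith [hrZ.trans_le (min_le_right _ _)]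
    -- hlog estimate
    have hD1 : |α (r * z + u) - α u| * |Real.log (r * |z|)| ≤ ε / 2 := by
      rcases lt_or_gt_of_ne hz0 with hzneg | hzpos'
      · -- z < 0 : apply at x = u + r*z with increment r*|z|
        have hxs : u + r * z + r * |z| = u := by
          rw [abs_of_neg hzneg]; ring
        have hrz1 : |r * z| ≤ 1 := by
          rw [abs_mul, abs_of_pos hr0]; exact hs1.le
        have hx : u + r * z ∈ Set.Icc (-(|u| + Z + 1)) (|u| + Z + 1) := by
          rw [Set.mem_Icc, ← abs_le]
          calc |u + r * z| ≤ |u| + |r * z| := abs_add_le _ _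
            _ ≤ |u| + Z + 1 := by nlinarith
        have h0 := hδ₂ (r * |z|) hspos hsδ₂ (u + r * z) hx
        rw [hxs] at h0
        calc |α (r * z + u) - α u| * |Real.log (r * |z|)|
            = |α u - α (u + r * z)| * |Real.log (r * |z|)| := by
              rw [abs_sub_comm, add_comm (r*z) u]
          _ ≤ ε / 2 := h0
      · -- z > 0 : apply at x = u with increment r*z = r*|z|
        have hseq : r * |z| = r * z := by rw [abs_of_pos hzpos']
        have hu : u ∈ Set.Icc (-(|u| + Z + 1)) (|u| + Z + 1) := by
          rw [Set.mem_Icc, ← abs_le]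
          nlinarith [abs_nonneg u]
        have h0 := hδ₂ (r * |z|) hspos hsδ₂ u hu
        rw [hseq] at h0
        rw [hseq]
        calc |α (r * z + u) - α u| * |Real.log (r * z)|
            = |α (u + r * z) - α u| * |Real.log (r * z)| := by rw [add_comm (r*z) u]
          _ ≤ ε / 2 := h0
    -- continuity estimate
    have hD2 : |α (r * z + u) - α u| ≤ ε₂ := by
      have hd : dist (r * z + u) u < δ₁ := by
        rw [Real.dist_eq, add_sub_cancel_right, abs_mul, abs_of_pos hr0]
        exact hsδ₁
      have h0 := hδ₁ _ hd
      rw [Real.dist_eq] at h0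
      exact h0.le
    -- log comparison
    have hlogr : |Real.log r| ≤ |Real.log (r * |z|)| + Real.log Z := by
      have hlr : Real.log r < 0 := Real.log_neg hr0 hr1
      have hls : Real.log (r * |z|) < 0 := Real.log_neg hspos hs1
      have hsplit : Real.log (r * |z|) = Real.log r + Real.log |z| :=
        Real.log_mul hr0.ne' hzpos.ne'
      have hlz : Real.log |z| ≤ Real.log Z := Real.log_le_log hzpos hzZ
      rw [abs_of_neg hlr, abs_of_neg hls]
      linarith
    calc |α (r * z + u) - α u| * |Real.log r|
        ≤ |α (r * z + u) - α u| * (|Real.log (r * |z|)| + Real.log Z) :=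
          mul_le_mul_of_nonneg_left hlogr (abs_nonneg _)
      _ = |α (r * z + u) - α u| * |Real.log (r * |z|)|
            + |α (r * z + u) - α u| * Real.log Z := by ring
      _ ≤ ε / 2 + ε₂ * Real.log Z := by gcongr
      _ ≤ ε / 2 + ε / 2 := by linarith
      _ = ε := by ring
  -- dominated convergence
  have hpab_nonneg : ∀ t : ℝ, 0 ≤ pab a b t := fun t =>
    le_trans (Real.rpow_nonneg (abs_nonneg t) a) (le_max_left _ _)
  apply tendsto_integral_filter_of_dominated_convergence
    (fun z => Real.exp 1 * pab a b (g z))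
  · -- measurability
    filter_upwards [self_mem_nhdsWithin] with r (hr : 0 < r)
    have m1 : Measurable fun z : ℝ => α (r * z + u) :=
      hαc.measurable.comp ((measurable_id.const_mul r).add_const u)
    have m2 : Measurable fun z : ℝ => |g z| ^ α (r * z + u) :=
      measurable_abs_rpow hgm m1 (fun z => (hαpos _).ne')
    have m3 : Measurable fun z : ℝ => r ^ (1 - α (r * z + u) / α u) := by
      have heq : (fun z : ℝ => r ^ (1 - α (r * z + u) / α u)) =
          fun z => Real.exp (Real.log r * (1 - α (r * z + u) / α u)) := by
        funext z; rw [Real.rpow_def_of_pos hr]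
      rw [heq]
      exact Real.measurable_exp.comp
        (measurable_const.mul (measurable_const.sub (m1.div_const _)))
    exact (m2.mul m3).aestronglyMeasurable
  · -- bound
    filter_upwards [key (α u) hau, Ioo_mem_nhdsGT_of_mem
      ⟨le_refl (0:ℝ), one_pos⟩] with r hkey hr
    obtain ⟨hr0, hr1⟩ := hr
    refine ae_of_all _ fun z => ?_
    rcases le_or_gt |z| Z with hzZ | hzZ
    · have h1 : |g z| ^ α (r * z + u) ≤ pab a b (g z) :=
        abs_rpow_le_pab ha (hα _).1 (hα _).2 (g z)
      have h2 : r ^ (1 - α (r * z + u) / α u) ≤ Real.exp 1 := by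
        rw [Real.rpow_def_of_pos hr0]
        apply Real.exp_le_exp.mpr
        have habs : |Real.log r * (1 - α (r * z + u) / α u)| ≤ 1 := by
          have he : (1 - α (r * z + u) / α u) = (α u - α (r * z + u)) / α u := by
            field_simp
          rw [he, abs_mul, abs_div, abs_of_pos hau, ← mul_div_assoc, div_le_one hau,
            mul_comm, abs_sub_comm]
          exact hkey z hzZ
        exact (le_abs_self _).trans habs
      have hnn1 : 0 ≤ |g z| ^ α (r * z + u) := Real.rpow_nonneg (abs_nonneg _) _
      have hnn2 : 0 ≤ r ^ (1 - α (r * z + u) / α u) := Real.rpow_nonneg hr0.le _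
      rw [Real.norm_eq_abs, abs_of_nonneg (mul_nonneg hnn1 hnn2)]
      calc |g z| ^ α (r * z + u) * r ^ (1 - α (r * z + u) / α u)
          ≤ pab a b (g z) * Real.exp 1 :=
            mul_le_mul h1 h2 hnn2 (hpab_nonneg (g z))
        _ = Real.exp 1 * pab a b (g z) := by ring
    · have hgz : g z = 0 := hsupp z hzZ
      rw [hgz]
      simp only [abs_zero, Real.norm_eq_abs]
      rw [Real.zero_rpow (hαpos (r * z + u)).ne', zero_mul, abs_zero]
      exact mul_nonneg (Real.exp_pos 1).le (hpab_nonneg 0)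
  · exact hgi.const_mul _
  · -- pointwise limit
    refine ae_of_all _ fun z => ?_
    rcases eq_or_ne (g z) 0 with hgz | hgz
    · have hz0 : ∀ r : ℝ, |g z| ^ α (r * z + u) * r ^ (1 - α (r * z + u) / α u) = 0 := by
        intro r
        rw [hgz, abs_zero, Real.zero_rpow (hαpos (r * z + u)).ne', zero_mul]
      simp only [hz0]
      rw [hgz, abs_zero, Real.zero_rpow hau.ne']
      exact tendsto_const_nhds
    · have hzZ : |z| ≤ Z := by
        by_contra h
        exact hgz (hsupp z (not_le.mp h))
      have hc : 0 < |g z| := abs_pos.mpr hgz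
      have t1 : Tendsto (fun r : ℝ => |g z| ^ α (r * z + u)) (𝓝[>] (0:ℝ))
          (𝓝 (|g z| ^ α u)) := by
        have hcont : Continuous fun r : ℝ => |g z| ^ α (r * z + u) := by
          have hc2 : Continuous fun r : ℝ => α (r * z + u) :=
            hαc.comp ((continuous_id.mul continuous_const).add continuous_const)
          exact continuous_const.rpow hc2 (fun r => Or.inl hc.ne')
        have h0 := (hcont.tendsto 0).mono_left (nhdsWithin_le_nhds (s := Set.Ioi (0:ℝ)))
        simpa using h0
      have t2 : Tendsto (fun r : ℝ => r ^ (1 - α (r * z + u) / α u)) (𝓝[>] (0:ℝ))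
          (𝓝 1) := by
        have texp : Tendsto (fun r : ℝ => Real.log r * (1 - α (r * z + u) / α u))
            (𝓝[>] (0:ℝ)) (𝓝 0) := by
          rw [Metric.tendsto_nhds]
          intro ε' hε'
          filter_upwards [key (ε' * α u / 2) (by positivity)] with r hkey
          rw [Real.dist_eq, sub_zero]
          have he : (1 - α (r * z + u) / α u) = (α u - α (r * z + u)) / α u := by
            field_simp
          rw [he, abs_mul, abs_div, abs_of_pos hau, ← mul_div_assoc, div_lt_iff₀ hau,
            mul_comm, abs_sub_comm]
          calc |α (r * z + u) - α u| * |Real.log r| ≤ ε' * α u / 2 := hkey z hzZ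
            _ < ε' * α u := by nlinarith
        have h0 := (Real.continuous_exp.tendsto 0).comp texp
        rw [Real.exp_zero] at h0
        apply h0.congr'
        filter_upwards [self_mem_nhdsWithin] with r (hr : 0 < r)
        simp only [Function.comp_apply]
        rw [Real.rpow_def_of_pos hr]
      have h0 := t1.mul t2
      simpa using h0
end
end

section
/- Let 0 < a ≤ b ≤ 2, let α : ℝ → [a,b] be continuous, let u ∈ ℝ and h₀ > 0. Let f : ℝ × ℝ → ℝ with f(t,·) ∈ F_{a,b} for all t, and let k : ℝ × ℝ → ℝ be jointly measurable with k(t,·) ∈ F_{a,b} for all t, such that for every t ∈ ℝ, lim_{r→0⁺} ∫_ℝ | (f(u+rt, u+rz) − f(u, u+rz)) / r^{h₀ − 1/α(u+rz)} − k(t,z) |^{a,b} dz = 0. Then for every m ∈ ℕ, all t₁,…,t_m ∈ ℝ and all θ₁,…,θ_m ∈ ℝ, lim_{r→0⁺} ∫_ℝ | Σ_{j=1}^m θ_j r^{−h₀ + 1/α(rz+u)} (f(u+rt_j, rz+u) − f(u, rz+u)) |^{α(rz+u)} dz = ∫_ℝ | Σ_{j=1}^m θ_j k(t_j, z) |^{α(u)}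 dz. -/
open MeasureTheory Filter Set Topology ProbabilityTheory BoundedContinuousFunction

noncomputable section

variable {a b : ℝ}

lemma pab_nonneg (a b s : ℝ) : 0 ≤ pab a b s :=
  le_max_of_le_left (Real.rpow_nonneg (abs_nonneg s) a)

lemma pab_zero (ha : 0 < a) (hb : 0 < b) : pab a b 0 = 0 := by
  simp [pab, Real.zero_rpow ha.ne', Real.zero_rpow hb.ne']

lemma continuous_pab (ha : 0 < a) (hb : 0 < b) : Continuous (pab a b) := by
  apply Continuous.max
  · exact (continuous_abs).rpow_const (fun x => Or.inr ha.le)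
  · exact (continuous_abs).rpow_const (fun x => Or.inr hb.le)

lemma rpow_le_pab (ha : 0 < a) {c : ℝ} (hc : c ∈ Set.Icc a b) (s : ℝ) :
    |s| ^ c ≤ pab a b s := by
  rcases eq_or_ne s 0 with rfl | hs
  · simp only [abs_zero]
    rw [Real.zero_rpow (lt_of_lt_of_le ha hc.1).ne']
    exact pab_nonneg a b 0
  have h0 : (0:ℝ) < |s| := abs_pos.mpr hs
  rcases le_total (|s|) 1 with h1 | h1
  · exact le_max_of_le_left (Real.rpow_le_rpow_of_exponent_ge h0 h1 hc.1)
  · exact le_max_of_le_right (Real.rpow_le_rpow_of_exponent_le h1 hc.2)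

lemma pab_mono (ha : 0 ≤ a) (hb : 0 ≤ b) {s t : ℝ} (h : |s| ≤ |t|) :
    pab a b s ≤ pab a b t :=
  max_le_max (Real.rpow_le_rpow (abs_nonneg s) h ha) (Real.rpow_le_rpow (abs_nonneg s) h hb)

lemma pab_mul (ha : 0 < a) (hab : a ≤ b) (s t : ℝ) :
    pab a b (s * t) ≤ pab a b s * pab a b t := by
  have key : ∀ c ∈ Set.Icc a b, |s * t| ^ c ≤ pab a b s * pab a b t := by
    intro c hc
    rw [abs_mul, Real.mul_rpow (abs_nonneg s) (abs_nonneg t)]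
    exact mul_le_mul (rpow_le_pab ha hc s) (rpow_le_pab ha hc t)
      (Real.rpow_nonneg (abs_nonneg t) c) (pab_nonneg a b s)
  exact max_le (key a ⟨le_refl a, hab⟩) (key b ⟨hab, le_refl b⟩)

/-- Key splitting inequality, uniform in `c ∈ [a,b]`. -/
lemma add_rpow_le (ha : 0 < a) {δ c s t : ℝ} (hδ : 0 < δ) (hc : c ∈ Set.Icc a b)
    (hs : 0 ≤ s) (ht : 0 ≤ t) :
    (s + t) ^ c ≤ (1 + δ) ^ b * s ^ c + ((1 + δ) / δ) ^ b * t ^ c := by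
  have hc0 : 0 < c := lt_of_lt_of_le ha hc.1
  have hb0 : 0 < b := lt_of_lt_of_le hc0 hc.2
  have h1δ : (1:ℝ) ≤ 1 + δ := by linarith
  have h1δδ : (1:ℝ) ≤ (1 + δ) / δ := by
    rw [le_div_iff₀ hδ]; linarith
  rcases le_total t (δ * s) with h | h
  · have h2 : (s + t) ^ c ≤ ((1 + δ) * s) ^ c := by
      apply Real.rpow_le_rpow (by linarith) (by nlinarith) hc0.le
    have h3 : ((1 + δ) * s) ^ c = (1 + δ) ^ c * s ^ c :=
      Real.mul_rpow (by linarith) hs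
    have h4 : (1 + δ) ^ c ≤ (1 + δ) ^ b :=
      Real.rpow_le_rpow_of_exponent_le h1δ hc.2
    have h5 : (1 + δ) ^ c * s ^ c ≤ (1 + δ) ^ b * s ^ c :=
      mul_le_mul_of_nonneg_right h4 (Real.rpow_nonneg hs c)
    have h6 : (0:ℝ) ≤ ((1 + δ) / δ) ^ b * t ^ c := by positivity
    linarith [h2.trans (h3.le.trans h5)]
  · have hsle : s ≤ t / δ := by
      rw [le_div_iff₀ hδ]; nlinarith
    have h2 : (s + t) ^ c ≤ ((1 + δ) / δ * t) ^ c := by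
      apply Real.rpow_le_rpow (by linarith) _ hc0.le
      have : (1 + δ) / δ * t = t / δ + t := by field_simp
      linarith
    have h3 : ((1 + δ) / δ * t) ^ c = ((1 + δ) / δ) ^ c * t ^ c :=
      Real.mul_rpow (by positivity) ht
    have h4 : ((1 + δ) / δ) ^ c ≤ ((1 + δ) / δ) ^ b :=
      Real.rpow_le_rpow_of_exponent_le h1δδ hc.2
    have h5 : ((1 + δ) / δ) ^ c * t ^ c ≤ ((1 + δ) / δ) ^ b * t ^ c :=
      mul_le_mul_of_nonneg_right h4 (Real.rpow_nonneg ht c)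
    have h6 : (0:ℝ) ≤ (1 + δ) ^ b * s ^ c := by positivity
    linarith [h2.trans (h3.le.trans h5)]

lemma pab_add (ha : 0 < a) (hab : a ≤ b) (s t : ℝ) :
    pab a b (s + t) ≤ 2 ^ b * (pab a b s + pab a b t) := by
  have key : ∀ c ∈ Set.Icc a b, |s + t| ^ c ≤ 2 ^ b * (pab a b s + pab a b t) := by
    intro c hc
    have hc0 : 0 < c := lt_of_lt_of_le ha hc.1
    have h1 : |s + t| ^ c ≤ (|s| + |t|) ^ c :=
      Real.rpow_le_rpow (abs_nonneg _) (abs_add_le s t) hc0.le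
    have h2 : (|s| + |t|) ^ c ≤ (1+1:ℝ) ^ b * |s| ^ c + ((1+1:ℝ)/1) ^ b * |t| ^ c :=
      add_rpow_le ha one_pos hc (abs_nonneg s) (abs_nonneg t)
    have h3 : ((1+1:ℝ)/1) = (2:ℝ) := by norm_num
    have h4 : (1+1:ℝ) = (2:ℝ) := by norm_num
    rw [h3, h4] at h2
    have h5 : |s| ^ c ≤ pab a b s := rpow_le_pab ha hc s
    have h6 : |t| ^ c ≤ pab a b t := rpow_le_pab ha hc t
    have h7 : (0:ℝ) < 2 ^ b := by positivity
    nlinarith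
  exact max_le (key a ⟨le_refl a, hab⟩) (key b ⟨hab, le_refl b⟩)

lemma pab_sum (ha : 0 < a) (hab : a ≤ b) (m : ℕ) :
    ∃ C > (0:ℝ), ∀ x : Fin m → ℝ, pab a b (∑ j, x j) ≤ C * ∑ j, pab a b (x j) := by
  induction m with
  | zero =>
    exact ⟨1, one_pos, fun x => by simp [pab_zero ha (lt_of_lt_of_le ha hab)]⟩
  | succ n ih =>
    obtain ⟨C, hC, hCle⟩ := ih
    have h2b : (0:ℝ) < 2 ^ b := by positivity
    refine ⟨2 ^ b * (1 + C), by positivity, fun x => ?_⟩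
    rw [Fin.sum_univ_succ, Fin.sum_univ_succ]
    have h1 := pab_add ha hab (x 0) (∑ j : Fin n, x j.succ)
    have h2 := hCle (fun j => x j.succ)
    have h3 : (0:ℝ) ≤ pab a b (x 0) := pab_nonneg a b _
    have h4 : (0:ℝ) ≤ ∑ j : Fin n, pab a b (x j.succ) :=
      Finset.sum_nonneg fun j _ => pab_nonneg a b _
    nlinarith [mul_nonneg h2b.le h3, mul_nonneg h2b.le h4, mul_nonneg (mul_nonneg h2b.le hC.le) h3, mul_pos h2b hC]

/-- Uniform `ε`-inequality: `||x|^c - |y|^c| ≤ ε|y|^c + C|x-y|^c`. -/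
lemma abs_rpow_sub_le (ha : 0 < a) (hab : a ≤ b) (hb : b ≤ 2) {ε : ℝ} (hε : 0 < ε) :
    ∃ C > (0:ℝ), ∀ c ∈ Set.Icc a b, ∀ x y : ℝ,
      abs (|x| ^ c - |y| ^ c) ≤ ε * |y| ^ c + C * |x - y| ^ c := by
  have h2b : (0:ℝ) < 2 ^ b := by positivity
  set δ : ℝ := min 1 (ε / (3 * (1 + 2 ^ b))) with hδdef
  have hδ : 0 < δ := lt_min one_pos (by positivity)
  have hδ1 : δ ≤ 1 := min_le_left _ _
  have h1δ : (1:ℝ) ≤ 1 + δ := by linarith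
  have hη : (1 + δ) ^ b ≤ 1 + 3 * δ := by
    have h1 : (1 + δ) ^ b ≤ (1 + δ) ^ (2:ℝ) :=
      Real.rpow_le_rpow_of_exponent_le h1δ hb
    have h2 : (1 + δ) ^ (2:ℝ) = (1 + δ) * (1 + δ) := by
      rw [show (2:ℝ) = ((2:ℕ):ℝ) by norm_num, Real.rpow_natCast]; ring
    rw [h2] at h1
    nlinarith [mul_nonneg hδ.le (sub_nonneg.mpr hδ1)]
  have h3δ : 3 * δ * (1 + 2 ^ b) ≤ ε := by
    have : δ ≤ ε / (3 * (1 + 2 ^ b)) := min_le_right _ _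
    rw [le_div_iff₀ (by positivity)] at this
    nlinarith
  set D : ℝ := ((1 + δ) / δ) ^ b with hDdef
  have hD : 0 < D := by positivity
  refine ⟨D + ε + 1, by positivity, fun c hc x y => ?_⟩
  have hc0 : 0 < c := lt_of_lt_of_le ha hc.1
  have key : ∀ s t : ℝ, |s| ^ c ≤ (1 + δ) ^ b * |t| ^ c + D * |s - t| ^ c := by
    intro s t
    have h1 : |s| ^ c ≤ (|t| + |s - t|) ^ c := by
      apply Real.rpow_le_rpow (abs_nonneg s) _ hc0.le
      calc |s| = |t + (s - t)| := by ring_nf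
        _ ≤ |t| + |s - t| := abs_add_le _ _
    exact h1.trans (add_rpow_le ha hδ hc (abs_nonneg t) (abs_nonneg _))
  have key2 : ∀ s t : ℝ, |s| ^ c ≤ 2 ^ b * |t| ^ c + 2 ^ b * |s - t| ^ c := by
    intro s t
    have h1 : |s| ^ c ≤ (|t| + |s - t|) ^ c := by
      apply Real.rpow_le_rpow (abs_nonneg s) _ hc0.le
      calc |s| = |t + (s - t)| := by ring_nf
        _ ≤ |t| + |s - t| := abs_add_le _ _
    have h2 := add_rpow_le ha one_pos hc (abs_nonneg t) (abs_nonneg (s - t))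
    norm_num at h2
    linarith [h1.trans h2]
  have hxy : |y - x| = |x - y| := abs_sub_comm y x
  have k1 := key x y
  have k2 := key y x
  have k3 := key2 x y
  rw [hxy] at k2
  have hyc : (0:ℝ) ≤ |y| ^ c := Real.rpow_nonneg (abs_nonneg y) c
  have hxc : (0:ℝ) ≤ |x| ^ c := Real.rpow_nonneg (abs_nonneg x) c
  have hdc : (0:ℝ) ≤ |x - y| ^ c := Real.rpow_nonneg (abs_nonneg _) c
  rw [abs_le]
  constructor
  · -- |y|^c - |x|^c ≤ ε|y|^c + C|x-y|^c
    nlinarith [mul_nonneg (mul_nonneg (by positivity : (0:ℝ) ≤ 3*δ) h2b.le) hdc,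
      mul_nonneg (by positivity : (0:ℝ) ≤ 3*δ) hdc]
  · nlinarith

lemma pab_neg (a b s : ℝ) : pab a b (-s) = pab a b s := by simp [pab]

lemma pab_sub (ha : 0 < a) (hab : a ≤ b) (s t : ℝ) :
    pab a b (s - t) ≤ 2 ^ b * (pab a b s + pab a b t) := by
  have h := pab_add ha hab s (-t)
  rw [pab_neg] at h
  simpa [sub_eq_add_neg] using h

lemma integrable_of_le_integrable {g h : ℝ → ℝ} (hgm : AEStronglyMeasurable g volume)
    (hg0 : ∀ z, 0 ≤ g z) (hgh : ∀ z, g z ≤ h z) (hh : Integrable h) : Integrable g :=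
  hh.mono' hgm (Filter.Eventually.of_forall fun z => by
    rw [Real.norm_eq_abs, abs_of_nonneg (hg0 z)]; exact hgh z)

lemma integrable_comp_affine {g : ℝ → ℝ} (hg : Integrable g) {r : ℝ} (hr : r ≠ 0) (u : ℝ) :
    Integrable (fun z => g (r * z + u)) :=
  (hg.comp_add_right u).comp_mul_left' hr


/-- under the kernel convergence condition (3.4), the exponents of the
characteristic functions of the rescaled increments converge:
`∫ |Σ_j θ_j r^{−h₀+1/α(rz+u)}(f(u+rt_j,rz+u) − f(u,rz+u))|^{α(rz+u)} dz
  → ∫ |Σ_j θ_j k(t_j,z)|^{α(u)} dz` as `r → 0⁺`. -/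
theorem multistable_localisability_exponent_limit (a b : ℝ) (ha : 0 < a) (hab : a ≤ b)
    (hb : b ≤ 2)
    (α : ℝ → ℝ) (hαc : Continuous α) (hα : ∀ x, α x ∈ Set.Icc a b)
    (u h₀ : ℝ) (hh₀ : 0 < h₀)
    (f : ℝ → ℝ → ℝ) (hf : ∀ t, MemFab a b (f t))
    (k : ℝ → ℝ → ℝ) (hkm : Measurable (Function.uncurry k)) (hk : ∀ t, MemFab a b (k t))
    (hlim : ∀ t : ℝ,
      Tendsto (fun r : ℝ => ∫ z : ℝ,
          pab a b ((f (u + r * t) (u + r * z) - f u (u + r * z)) /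
            r ^ (h₀ - 1 / α (u + r * z)) - k t z))
        (𝓝[>] (0:ℝ)) (𝓝 0)) :
    ∀ (m : ℕ) (t θ : Fin m → ℝ),
      Tendsto (fun r : ℝ => ∫ z : ℝ,
          |∑ j, θ j * r ^ (-h₀ + 1 / α (r * z + u)) *
            (f (u + r * t j) (r * z + u) - f u (r * z + u))| ^ α (r * z + u))
        (𝓝[>] (0:ℝ)) (𝓝 (∫ z : ℝ, |∑ j, θ j * k (t j) z| ^ α u)) := by
  intro m t θ
  have hb0 : 0 < b := lt_of_lt_of_le ha hab
  have hαpos : ∀ x, 0 < α x := fun x => lt_of_lt_of_le ha (hα x).1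
  -- notation
  set q : ℝ → Fin m → ℝ → ℝ := fun r j z =>
    r ^ (-h₀ + 1 / α (r * z + u)) * (f (u + r * t j) (r * z + u) - f u (r * z + u)) with hqdef
  set G : ℝ → ℝ → ℝ := fun r z => ∑ j, θ j * r ^ (-h₀ + 1 / α (r * z + u)) *
    (f (u + r * t j) (r * z + u) - f u (r * z + u)) with hGdef
  set K : ℝ → ℝ := fun z => ∑ j, θ j * k (t j) z with hKdef
  obtain ⟨Cm, hCm, hCmle⟩ := pab_sum ha hab m
  -- measurability
  have haff : ∀ r : ℝ, Measurable fun z : ℝ => r * z + u :=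
    fun r => (measurable_id.const_mul r).add_const u
  have hαm : Measurable α := hαc.measurable
  have hexp : ∀ r : ℝ, Measurable fun z : ℝ => r ^ (-h₀ + 1 / α (r * z + u)) := fun r =>
    measurable_const.pow ((measurable_const.div (hαm.comp (haff r))).const_add (-h₀))
  have hΔ : ∀ (r : ℝ) (j : Fin m),
      Measurable fun z : ℝ => f (u + r * t j) (r * z + u) - f u (r * z + u) := fun r j =>
    ((hf (u + r * t j)).1.comp (haff r)).sub ((hf u).1.comp (haff r))
  have hqm : ∀ r j, Measurable (q r j) := fun r j => (hexp r).mul (hΔ r j)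
  have hGm : ∀ r, Measurable (G r) := by
    intro r
    apply Finset.measurable_sum
    intro j _
    exact ((hexp r).const_mul (θ j)).mul (hΔ r j)
  have hKm : Measurable K := by
    apply Finset.measurable_sum
    intro j _
    exact (hk (t j)).1.const_mul (θ j)
  show Tendsto (fun r : ℝ => ∫ z : ℝ, |G r z| ^ α (r * z + u)) (𝓝[>] (0:ℝ))
    (𝓝 (∫ z : ℝ, |K z| ^ α u))
  -- integrability of pab ∘ K
  have hKpab : Integrable (fun z => pab a b (K z)) := by
    refine integrable_of_le_integrable
      (((continuous_pab ha hb0).measurable.comp hKm).aestronglyMeasurable)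
      (fun z => pab_nonneg _ _ _) (fun z => ?_)
      ((integrable_finset_sum Finset.univ (fun j _ => ((hk (t j)).2.const_mul (pab a b (θ j))))).const_mul Cm)
    calc pab a b (K z) ≤ Cm * ∑ j, pab a b (θ j * k (t j) z) := hCmle _
      _ ≤ Cm * ∑ j, pab a b (θ j) * pab a b (k (t j) z) := by
          exact mul_le_mul_of_nonneg_left
            (Finset.sum_le_sum fun j _ => pab_mul ha hab _ _) hCm.le
  -- bound on the scaling factor
  have hMr : ∀ r : ℝ, 0 < r → ∀ z : ℝ, |r ^ (-h₀ + 1 / α (r * z + u))| ≤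
      |max (r ^ (-h₀ + 1/a)) (r ^ (-h₀ + 1/b))| := by
    intro r hr z
    rw [abs_of_pos (Real.rpow_pos_of_pos hr _),
      abs_of_pos (lt_max_of_lt_left (Real.rpow_pos_of_pos hr _))]
    rcases le_total r 1 with h1 | h1
    · refine le_max_of_le_right (Real.rpow_le_rpow_of_exponent_ge hr h1 ?_)
      have h2 : 1 / b ≤ 1 / α (r * z + u) := one_div_le_one_div_of_le (hαpos _) (hα _).2
      linarith
    · refine le_max_of_le_left (Real.rpow_le_rpow_of_exponent_le h1 ?_)
      have h2 : 1 / α (r * z + u) ≤ 1 / a := one_div_le_one_div_of_le ha (hα _).1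
      linarith
  have hqpab : ∀ r : ℝ, 0 < r → ∀ j, Integrable (fun z => pab a b (q r j z)) := by
    intro r hr j
    refine integrable_of_le_integrable
      (((continuous_pab ha hb0).measurable.comp (hqm r j)).aestronglyMeasurable)
      (fun z => pab_nonneg _ _ _) (fun z => ?_)
      ((((integrable_comp_affine (hf (u + r * t j)).2 hr.ne' u).add
        (integrable_comp_affine (hf u).2 hr.ne' u)).const_mul (2 ^ b)).const_mul
          (pab a b (max (r ^ (-h₀ + 1/a)) (r ^ (-h₀ + 1/b)))))
    calc pab a b (q r j z)
        ≤ pab a b (r ^ (-h₀ + 1 / α (r * z + u))) *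
          pab a b (f (u + r * t j) (r * z + u) - f u (r * z + u)) := pab_mul ha hab _ _
      _ ≤ pab a b (max (r ^ (-h₀ + 1/a)) (r ^ (-h₀ + 1/b))) *
          (2 ^ b * (pab a b (f (u + r * t j) (r * z + u)) + pab a b (f u (r * z + u)))) :=
          mul_le_mul (pab_mono ha.le hb0.le (hMr r hr z)) (pab_sub ha hab _ _)
            (pab_nonneg _ _ _) (pab_nonneg _ _ _)
  have hqk : ∀ r : ℝ, 0 < r → ∀ j, Integrable (fun z => pab a b (q r j z - k (t j) z)) := by
    intro r hr j
    refine integrable_of_le_integrable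
      (((continuous_pab ha hb0).measurable.comp ((hqm r j).sub (hk (t j)).1)).aestronglyMeasurable)
      (fun z => pab_nonneg _ _ _) (fun z => pab_sub ha hab _ _)
      (((hqpab r hr j).add (hk (t j)).2).const_mul (2 ^ b))
  have hGKeq : ∀ (r : ℝ) (z : ℝ), G r z - K z = ∑ j, θ j * (q r j z - k (t j) z) := by
    intro r z
    simp only [hGdef, hKdef, hqdef, ← Finset.sum_sub_distrib]
    exact Finset.sum_congr rfl fun j _ => by ring
  have hGKle : ∀ (r : ℝ) (z : ℝ),
      pab a b (G r z - K z) ≤ Cm * ∑ j, pab a b (θ j) * pab a b (q r j z - k (t j) z) := by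
    intro r z
    rw [hGKeq r z]
    calc pab a b (∑ j, θ j * (q r j z - k (t j) z))
        ≤ Cm * ∑ j, pab a b (θ j * (q r j z - k (t j) z)) := hCmle _
      _ ≤ Cm * ∑ j, pab a b (θ j) * pab a b (q r j z - k (t j) z) :=
          mul_le_mul_of_nonneg_left (Finset.sum_le_sum fun j _ => pab_mul ha hab _ _) hCm.le
  have hGKint : ∀ r : ℝ, 0 < r → Integrable (fun z => pab a b (G r z - K z)) := by
    intro r hr
    refine integrable_of_le_integrable
      (((continuous_pab ha hb0).measurable.comp ((hGm r).sub hKm)).aestronglyMeasurable)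
      (fun z => pab_nonneg _ _ _) (hGKle r)
      ((integrable_finset_sum Finset.univ fun j _ => ((hqk r hr j).const_mul _)).const_mul _)
  have hGpab : ∀ r : ℝ, 0 < r → Integrable (fun z => pab a b (G r z)) := by
    intro r hr
    refine integrable_of_le_integrable
      (((continuous_pab ha hb0).measurable.comp (hGm r)).aestronglyMeasurable)
      (fun z => pab_nonneg _ _ _) (fun z => ?_)
      (((hGKint r hr).add hKpab).const_mul (2 ^ b))
    have h := pab_add ha hab (G r z - K z) (K z)
    rw [sub_add_cancel] at h
    exact h
  have hφint : ∀ r : ℝ, 0 < r → Integrable (fun z => |G r z| ^ α (r * z + u)) := by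
    intro r hr
    exact integrable_of_le_integrable
      (((hGm r).abs.pow (hαm.comp (haff r))).aestronglyMeasurable)
      (fun z => Real.rpow_nonneg (abs_nonneg _) _)
      (fun z => rpow_le_pab ha (hα _) _) (hGpab r hr)
  have hψint : ∀ r : ℝ, Integrable (fun z => |K z| ^ α (r * z + u)) := by
    intro r
    exact integrable_of_le_integrable
      ((hKm.abs.pow (hαm.comp (haff r))).aestronglyMeasurable)
      (fun z => Real.rpow_nonneg (abs_nonneg _) _)
      (fun z => rpow_le_pab ha (hα _) _) hKpab
  -- rewrite the kernel-convergence hypothesis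
  have hlimj : ∀ j, Tendsto (fun r : ℝ => ∫ z : ℝ, pab a b (q r j z - k (t j) z))
      (𝓝[>] (0:ℝ)) (𝓝 0) := by
    intro j
    refine (hlim (t j)).congr' ?_
    filter_upwards [self_mem_nhdsWithin] with r hr
    have hr' : (0:ℝ) < r := hr
    have key : ∀ z : ℝ, (f (u + r * t j) (u + r * z) - f u (u + r * z)) /
        r ^ (h₀ - 1 / α (u + r * z)) = q r j z := by
      intro z
      simp only [hqdef]
      rw [add_comm u (r * z)]
      rw [show -h₀ + 1 / α (r * z + u) = -(h₀ - 1 / α (r * z + u)) from by ring,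
        Real.rpow_neg hr'.le, ← div_eq_inv_mul]
    exact congrArg (integral volume) (funext fun z => by rw [key z])
  have hCtend : Tendsto (fun r : ℝ => ∫ z : ℝ, pab a b (G r z - K z)) (𝓝[>] (0:ℝ)) (𝓝 0) := by
    have hupper : Tendsto (fun r : ℝ => Cm * ∑ j, pab a b (θ j) *
        ∫ z : ℝ, pab a b (q r j z - k (t j) z)) (𝓝[>] (0:ℝ)) (𝓝 0) := by
      have h4 : Tendsto (fun r : ℝ => Cm * ∑ j, pab a b (θ j) *
          ∫ z : ℝ, pab a b (q r j z - k (t j) z)) (𝓝[>] (0:ℝ))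
          (𝓝 (Cm * ∑ j : Fin m, pab a b (θ j) * (0:ℝ))) :=
        (tendsto_finset_sum Finset.univ fun j _ => (hlimj j).const_mul _).const_mul _
      simpa using h4
    refine tendsto_of_tendsto_of_tendsto_of_le_of_le' tendsto_const_nhds hupper
      (Eventually.of_forall fun r => integral_nonneg fun z => pab_nonneg _ _ _) ?_
    filter_upwards [self_mem_nhdsWithin] with r hr
    have hr' : (0:ℝ) < r := hr
    calc ∫ z : ℝ, pab a b (G r z - K z)
        ≤ ∫ z : ℝ, Cm * ∑ j, pab a b (θ j) * pab a b (q r j z - k (t j) z) :=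
          integral_mono_of_nonneg (Eventually.of_forall fun z => pab_nonneg _ _ _)
            ((integrable_finset_sum Finset.univ fun j _ => ((hqk r hr' j).const_mul _)).const_mul _)
            (Eventually.of_forall (hGKle r))
      _ = Cm * ∑ j, pab a b (θ j) * ∫ z : ℝ, pab a b (q r j z - k (t j) z) := by
          rw [integral_const_mul]
          congr 1
          rw [integral_finset_sum Finset.univ fun j _ => ((hqk r hr' j).const_mul _)]
          exact Finset.sum_congr rfl fun j _ => integral_const_mul _ _
  -- dominated convergence for the K-term
  have hαtend : ∀ z : ℝ, Tendsto (fun r : ℝ => α (r * z + u)) (𝓝[>] (0:ℝ)) (𝓝 (α u)) := by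
    intro z
    have h1 : Tendsto (fun r : ℝ => r * z + u) (𝓝 (0:ℝ)) (𝓝 u) := by
      have h2 : Continuous fun r : ℝ => r * z + u :=
        (continuous_id.mul continuous_const).add continuous_const
      have h3 := h2.tendsto 0
      simpa using h3
    exact ((hαc.tendsto u).comp h1).mono_left nhdsWithin_le_nhds
  have hB : Tendsto (fun r : ℝ => ∫ z : ℝ, |K z| ^ α (r * z + u)) (𝓝[>] (0:ℝ))
      (𝓝 (∫ z : ℝ, |K z| ^ α u)) := by
    refine tendsto_integral_filter_of_dominated_convergence (fun z => pab a b (K z))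
      (Eventually.of_forall fun r => (hKm.abs.pow (hαm.comp (haff r))).aestronglyMeasurable)
      (Eventually.of_forall fun r => Eventually.of_forall fun z => ?_) hKpab
      (Eventually.of_forall fun z => ?_)
    · rw [Real.norm_eq_abs, abs_of_nonneg (Real.rpow_nonneg (abs_nonneg _) _)]
      exact rpow_le_pab ha (hα _) _
    · exact Tendsto.rpow tendsto_const_nhds (hαtend z) (Or.inr (hαpos u))
  -- final assembly
  rw [Metric.tendsto_nhds]
  intro ε hε
  set P := ∫ z : ℝ, pab a b (K z) with hPdef
  have hP0 : 0 ≤ P := integral_nonneg fun z => pab_nonneg _ _ _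
  have hε' : 0 < ε / (3 * (P + 1)) := by positivity
  obtain ⟨C, hC0, hCspec⟩ := abs_rpow_sub_le ha hab hb hε'
  have h1 := Metric.tendsto_nhds.mp hB (ε / 3) (by positivity)
  have h2 := Metric.tendsto_nhds.mp hCtend (ε / (3 * C)) (by positivity)
  filter_upwards [h1, h2, self_mem_nhdsWithin] with r hr1 hr2 hr3
  have hr' : (0:ℝ) < r := hr3
  have hpt : ∀ z : ℝ, |(|G r z| ^ α (r * z + u)) - (|K z| ^ α (r * z + u))| ≤
      (ε / (3 * (P + 1))) * pab a b (K z) + C * pab a b (G r z - K z) := by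
    intro z
    refine (hCspec (α (r * z + u)) (hα _) (G r z) (K z)).trans ?_
    exact add_le_add (mul_le_mul_of_nonneg_left (rpow_le_pab ha (hα _) _) hε'.le)
      (mul_le_mul_of_nonneg_left (rpow_le_pab ha (hα _) _) hC0.le)
  have hIub : (∫ z : ℝ, |(|G r z| ^ α (r * z + u)) - (|K z| ^ α (r * z + u))|) ≤
      (ε / (3 * (P + 1))) * P + C * ∫ z : ℝ, pab a b (G r z - K z) := by
    calc (∫ z : ℝ, |(|G r z| ^ α (r * z + u)) - (|K z| ^ α (r * z + u))|)
        ≤ ∫ z : ℝ, ((ε / (3 * (P + 1))) * pab a b (K z) + C * pab a b (G r z - K z)) :=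
          integral_mono_of_nonneg (Eventually.of_forall fun z => abs_nonneg _)
            ((hKpab.const_mul _).add ((hGKint r hr').const_mul _))
            (Eventually.of_forall hpt)
      _ = (ε / (3 * (P + 1))) * P + C * ∫ z : ℝ, pab a b (G r z - K z) := by
          rw [integral_add (hKpab.const_mul _) ((hGKint r hr').const_mul _),
            integral_const_mul, integral_const_mul]
  have habs : |(∫ z : ℝ, |G r z| ^ α (r * z + u)) - ∫ z : ℝ, |K z| ^ α (r * z + u)| ≤
      (ε / (3 * (P + 1))) * P + C * ∫ z : ℝ, pab a b (G r z - K z) := by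
    rw [← integral_sub (hφint r hr') (hψint r)]
    refine le_trans ?_ hIub
    have h3 := norm_integral_le_integral_norm (μ := volume)
      (fun z : ℝ => (|G r z| ^ α (r * z + u)) - |K z| ^ α (r * z + u))
    simpa [Real.norm_eq_abs] using h3
  have e1 : (ε / (3 * (P + 1))) * P ≤ ε / 3 := by
    rw [div_mul_eq_mul_div, div_le_div_iff₀ (by positivity) (by norm_num)]
    nlinarith
  have e2 : C * (∫ z : ℝ, pab a b (G r z - K z)) < ε / 3 := by
    rw [Real.dist_eq, sub_zero] at hr2
    have h3 : (∫ z : ℝ, pab a b (G r z - K z)) < ε / (3 * C) := lt_of_abs_lt hr2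
    calc C * (∫ z : ℝ, pab a b (G r z - K z)) < C * (ε / (3 * C)) :=
          mul_lt_mul_of_pos_left h3 hC0
      _ = ε / 3 := by field_simp
  rw [Real.dist_eq] at hr1 ⊢
  calc |(∫ z : ℝ, |G r z| ^ α (r * z + u)) - ∫ z : ℝ, |K z| ^ α u|
      ≤ |(∫ z : ℝ, |G r z| ^ α (r * z + u)) - ∫ z : ℝ, |K z| ^ α (r * z + u)| +
        |(∫ z : ℝ, |K z| ^ α (r * z + u)) - ∫ z : ℝ, |K z| ^ α u| := abs_sub_le _ _ _
    _ < ε := by linarith [habs, e1, e2, hr1]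
end
end
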